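/- arXiv:1010.1372 — 3 statements merged into one kernel-verified Lean document; each statement's English description precedes it below -/
import Mathlib

section
/- For each t = 0, 1, …, T there exists a function ũ_t : ℝ × 𝒫(ℝ) × {E, H} → ℝ such that, almost surely, u_t(S_0, …, S_t, d) = ũ_t(S_t, π_t, d) for both decisions d ∈ {E, H}. Consequently, the optimal value u*_t(S_0, …, S_t) = max(u_t(S_0,…,S_t,E), u_t(S_0,…,S_t,H)) almost surely equals ũ*_t(S_t, π_t) := max(ũ_t(S_t, π_t, E), ũ_t(S_t, π_t, H)); that is, the value and optimal decision at time t depend on the observed price history only through the current price S_t and the filtering distribution π_t. -/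
open MeasureTheory ProbabilityTheory MeasurableSpace Set

lemma vfa_iSup_comap_eq {Ω : Type*} [MeasurableSpace Ω] {γ : Type*} [MeasurableSpace γ] (Z : ℕ → Ω → γ) (t : ℕ) :
    (⨆ i ∈ Finset.range (t+1), MeasurableSpace.comap (Z i) inferInstance)
      = MeasurableSpace.comap (fun ω (i : Fin (t+1)) => Z i ω) inferInstance := by
  have : (inferInstance : MeasurableSpace (Fin (t+1) → γ))
      = ⨆ i : Fin (t+1), MeasurableSpace.comap (fun x => x i) inferInstance := rfl
  rw [this, MeasurableSpace.comap_iSup]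
  simp_rw [MeasurableSpace.comap_comp]
  apply le_antisymm
  · refine iSup₂_le fun i hi => ?_
    rw [Finset.mem_range] at hi
    exact le_iSup_of_le (⟨i, hi⟩ : Fin (t+1)) le_rfl
  · refine iSup_le fun i => ?_
    exact le_iSup₂_of_le (i : ℕ) (Finset.mem_range.mpr i.isLt) le_rfl

lemma vfa_isCountablySpanning_Iio_rat : IsCountablySpanning (⋃ a : ℚ, {Iio (a : ℝ)}) := by
  refine ⟨fun n => Iio ((n : ℚ) : ℝ), fun n => mem_iUnion.mpr ⟨n, rfl⟩, ?_⟩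
  ext x; simp only [mem_iUnion, mem_Iio, mem_univ, iff_true]
  obtain ⟨n, hn⟩ := exists_nat_gt x
  exact ⟨n, by exact_mod_cast hn⟩

lemma vfa_prob_ext_Iio {μ ν : Measure ℝ} [IsProbabilityMeasure μ] [IsProbabilityMeasure ν]
    (h : ∀ q : ℚ, μ (Iio (q : ℝ)) = ν (Iio (q : ℝ))) : μ = ν := by
  refine MeasureTheory.ext_of_generate_finite _ ?_ Real.isPiSystem_Iio_rat ?_ (by simp)
  · rw [BorelSpace.measurable_eq (α := ℝ)]; exact Real.borel_eq_generateFrom_Iio_rat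
  · rintro s hs
    rw [mem_iUnion] at hs
    obtain ⟨q, hq⟩ := hs
    rw [mem_singleton_iff] at hq
    subst hq; exact h q

lemma vfa_prob_ext_prod {μ ν : Measure (ℝ × ℝ)} [IsProbabilityMeasure μ] [IsProbabilityMeasure ν]
    (h : ∀ q r : ℚ, μ (Iio (q : ℝ) ×ˢ Iio (r : ℝ)) = ν (Iio (q : ℝ) ×ˢ Iio (r : ℝ))) : μ = ν := by
  refine MeasureTheory.ext_of_generate_finite
    (image2 (· ×ˢ ·) (⋃ a : ℚ, {Iio (a : ℝ)}) (⋃ a : ℚ, {Iio (a : ℝ)})) ?_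
    (IsPiSystem.prod Real.isPiSystem_Iio_rat Real.isPiSystem_Iio_rat) ?_ (by simp)
  · rw [← generateFrom_prod_eq vfa_isCountablySpanning_Iio_rat vfa_isCountablySpanning_Iio_rat]
    have h2 : (inferInstance : MeasurableSpace ℝ) = generateFrom (⋃ a : ℚ, {Iio (a : ℝ)}) := by
      rw [BorelSpace.measurable_eq (α := ℝ)]; exact Real.borel_eq_generateFrom_Iio_rat
    rw [← h2]
  · rintro s ⟨s₁, hs₁, s₂, hs₂, rfl⟩
    rw [mem_iUnion] at hs₁ hs₂
    obtain ⟨q, hq⟩ := hs₁; obtain ⟨r, hr⟩ := hs₂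
    rw [mem_singleton_iff] at hq hr
    subst hq; subst hr; exact h q r


lemma vfa_measurable_snoc {n : ℕ} :
    Measurable (fun q : (Fin n → ℝ) × ℝ => (Fin.snoc q.1 q.2 : Fin (n+1) → ℝ)) := by
  refine measurable_pi_lambda _ fun i => ?_
  refine Fin.lastCases ?_ (fun j => ?_) i
  · simpa [Fin.snoc_last] using measurable_snd
  · simpa [Fin.snoc_castSucc, Function.comp_def] using (measurable_pi_apply j).comp measurable_fst

/-- Generic conditional-expectation identity via `condDistrib`, for bounded
measurable integrands. -/
lemma vfa_condexp_eq {Ω : Type*} [MeasurableSpace Ω] (μ : Measure Ω) [IsProbabilityMeasure μ]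
    {β E : Type*} [MeasurableSpace β] [MeasurableSpace E] [StandardBorelSpace E] [Nonempty E]
    {X : Ω → β} (hX : Measurable X) {W : Ω → E} (hW : Measurable W)
    (f : β × E → ℝ) (hf : Measurable f) (C : ℝ) (hbd : ∀ p, |f p| ≤ C) :
    μ[fun ω => f (X ω, W ω) | MeasurableSpace.comap X inferInstance] =ᵐ[μ]
      fun ω => ∫ w, f (X ω, w) ∂(condDistrib W X μ (X ω)) := by
  refine condExp_prod_ae_eq_integral_condDistrib hX hW.aemeasurable hf.stronglyMeasurable ?_
  refine Integrable.mono' (integrable_const C)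
    ((hf.comp (hX.prodMk hW)).aestronglyMeasurable) (ae_of_all _ fun ω => ?_)
  simpa [Real.norm_eq_abs] using hbd (X ω, W ω)

/-- Two a.e.-probability-valued maps equal a.e. if their rational `Iio` evaluations
agree a.e. -/
lemma vfa_ae_measure_eq {Ω : Type*} [MeasurableSpace Ω] {μ : Measure Ω}
    {p q : Ω → Measure ℝ} (hp : ∀ ω, IsProbabilityMeasure (p ω))
    (hq : ∀ ω, IsProbabilityMeasure (q ω))
    (h : ∀ r : ℚ, ∀ᵐ ω ∂μ, p ω (Iio (r : ℝ)) = q ω (Iio (r : ℝ))) :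
    ∀ᵐ ω ∂μ, p ω = q ω := by
  filter_upwards [ae_all_iff.mpr h] with ω hω
  haveI := hp ω; haveI := hq ω
  exact vfa_prob_ext_Iio hω

lemma vfa_ae_measure_eq_prod {Ω : Type*} [MeasurableSpace Ω] {μ : Measure Ω}
    {p q : Ω → Measure (ℝ × ℝ)} (hp : ∀ ω, IsProbabilityMeasure (p ω))
    (hq : ∀ ω, IsProbabilityMeasure (q ω))
    (h : ∀ r s : ℚ, ∀ᵐ ω ∂μ, p ω (Iio (r : ℝ) ×ˢ Iio (s : ℝ)) = q ω (Iio (r : ℝ) ×ˢ Iio (s : ℝ))) :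
    ∀ᵐ ω ∂μ, p ω = q ω := by
  have h' : ∀ᵐ ω ∂μ, ∀ r s : ℚ, p ω (Iio (r : ℝ) ×ˢ Iio (s : ℝ)) = q ω (Iio (r : ℝ) ×ˢ Iio (s : ℝ)) :=
    ae_all_iff.mpr fun r => ae_all_iff.mpr (h r)
  filter_upwards [h'] with ω hω
  haveI := hp ω; haveI := hq ω
  exact vfa_prob_ext_prod hω

/-- Probability measures on ℝ, as a subtype (measurable space via `comap val`). -/
abbrev vfaPM : Type := {m : Measure ℝ // IsProbabilityMeasure m}

/-- The kernel sending `(x, m)` to `(δ_x).prod m`. -/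
noncomputable def vfaPair : Kernel (ℝ × vfaPM) (ℝ × ℝ) :=
  (Kernel.deterministic Prod.fst measurable_fst) ×ₖ
    ⟨fun z => (z.2 : Measure ℝ), measurable_subtype_coe.comp measurable_snd⟩

instance : IsMarkovKernel
    (⟨fun z => (z.2 : Measure ℝ), measurable_subtype_coe.comp measurable_snd⟩ :
      Kernel (ℝ × vfaPM) ℝ) := ⟨fun z => z.2.2⟩

instance : IsMarkovKernel vfaPair := by
  unfold vfaPair; infer_instance

lemma vfaPair_apply (z : ℝ × vfaPM) :
    vfaPair z = (Measure.dirac z.1).prod (z.2 : Measure ℝ) := by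
  rw [vfaPair, Kernel.prod_apply, Kernel.deterministic_apply]
  rfl

/-- The one-step joint kernel `ρ (x, m) = ∫ κ(x, y) dm(y)` on `(S_{t+1}, Y_{t+1})`. -/
noncomputable def vfaRho (κ : ℝ × ℝ → Measure (ℝ × ℝ)) (hκmeas : Measurable κ)
    (hκprob : ∀ p, IsProbabilityMeasure (κ p)) : Kernel (ℝ × vfaPM) (ℝ × ℝ) :=
  haveI : IsMarkovKernel (⟨κ, hκmeas⟩ : Kernel (ℝ × ℝ) (ℝ × ℝ)) := ⟨hκprob⟩
  (⟨κ, hκmeas⟩ : Kernel (ℝ × ℝ) (ℝ × ℝ)) ∘ₖ vfaPair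

lemma vfaRho_isMarkov (κ : ℝ × ℝ → Measure (ℝ × ℝ)) (hκmeas : Measurable κ)
    (hκprob : ∀ p, IsProbabilityMeasure (κ p)) : IsMarkovKernel (vfaRho κ hκmeas hκprob) := by
  haveI : IsMarkovKernel (⟨κ, hκmeas⟩ : Kernel (ℝ × ℝ) (ℝ × ℝ)) := ⟨hκprob⟩
  unfold vfaRho; infer_instance

lemma vfaRho_apply' (κ : ℝ × ℝ → Measure (ℝ × ℝ)) (hκmeas : Measurable κ)
    (hκprob : ∀ p, IsProbabilityMeasure (κ p)) (z : ℝ × vfaPM) {D : Set (ℝ × ℝ)}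
    (hD : MeasurableSet D) :
    vfaRho κ hκmeas hκprob z D = ∫⁻ y, κ (z.1, y) D ∂(z.2 : Measure ℝ) := by
  haveI : IsProbabilityMeasure (z.2 : Measure ℝ) := z.2.2
  rw [vfaRho, Kernel.comp_apply' _ _ _ hD, vfaPair_apply]
  rw [lintegral_prod]
  · simp only [Kernel.coe_mk]
    exact lintegral_dirac' _ (Measurable.lintegral_prod_right'
      (f := fun p : ℝ × ℝ => κ p D) (by
        have : Measurable fun p : ℝ × ℝ => κ p D := (Measure.measurable_coe hD).comp hκmeas
        exact this))
  · exact ((Kernel.measurable_coe (⟨κ, hκmeas⟩ : Kernel (ℝ × ℝ) (ℝ × ℝ)) hD)).aemeasurable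

lemma vfaRho_toReal (κ : ℝ × ℝ → Measure (ℝ × ℝ)) (hκmeas : Measurable κ)
    (hκprob : ∀ p, IsProbabilityMeasure (κ p)) (z : ℝ × vfaPM) {D : Set (ℝ × ℝ)}
    (hD : MeasurableSet D) :
    (vfaRho κ hκmeas hκprob z D).toReal = ∫ y, (κ (z.1, y) D).toReal ∂(z.2 : Measure ℝ) := by
  haveI : IsProbabilityMeasure (z.2 : Measure ℝ) := z.2.2
  rw [vfaRho_apply' κ hκmeas hκprob z hD, integral_toReal]
  · exact ((Kernel.measurable_coe (⟨κ, hκmeas⟩ : Kernel (ℝ × ℝ) (ℝ × ℝ)) hD).comp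
      measurable_prodMk_left).aemeasurable
  · exact ae_of_all _ fun y => by
      haveI := hκprob (z.1, y); exact measure_lt_top _ _

noncomputable def vfaPhi (κ : ℝ × ℝ → Measure (ℝ × ℝ)) (hκmeas : Measurable κ)
    (hκprob : ∀ p, IsProbabilityMeasure (κ p)) : Kernel ((ℝ × vfaPM) × ℝ) ℝ :=
  haveI := vfaRho_isMarkov κ hκmeas hκprob
  (vfaRho κ hκmeas hκprob).condKernel

lemma vfaPhi_isMarkov (κ : ℝ × ℝ → Measure (ℝ × ℝ)) (hκmeas : Measurable κ)
    (hκprob : ∀ p, IsProbabilityMeasure (κ p)) : IsMarkovKernel (vfaPhi κ hκmeas hκprob) := by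
  haveI := vfaRho_isMarkov κ hκmeas hκprob
  rw [vfaPhi]; infer_instance

lemma vfa_disintegrate (κ : ℝ × ℝ → Measure (ℝ × ℝ)) (hκmeas : Measurable κ)
    (hκprob : ∀ p, IsProbabilityMeasure (κ p)) :
    (vfaRho κ hκmeas hκprob).fst ⊗ₖ vfaPhi κ hκmeas hκprob = vfaRho κ hκmeas hκprob := by
  haveI := vfaRho_isMarkov κ hκmeas hκprob
  rw [vfaPhi]
  exact (vfaRho κ hκmeas hκprob).disintegrate _

/-- Pointwise disintegration identity: integrating `φ(s') ⋅ Φ((z,s'), A)` against `ρ z`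
equals integrating `φ(s') ⋅ 1_A(y')`. -/
lemma vfa_disint (κ : ℝ × ℝ → Measure (ℝ × ℝ)) (hκmeas : Measurable κ)
    (hκprob : ∀ p, IsProbabilityMeasure (κ p)) {s : Set ℝ} (hs : MeasurableSet s)
    (φ : ℝ → ℝ) (hφ : Measurable φ) (hφbd : ∀ b, |φ b| ≤ 1) (z : ℝ × vfaPM) :
    ∫ p, φ p.1 * ((vfaPhi κ hκmeas hκprob) (z, p.1) s).toReal
        ∂(vfaRho κ hκmeas hκprob z)
      = ∫ p, φ p.1 * (Set.indicator s (fun _ => (1:ℝ)) p.2) ∂(vfaRho κ hκmeas hκprob z) := by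
  haveI := vfaRho_isMarkov κ hκmeas hκprob
  set ρ := vfaRho κ hκmeas hκprob with hρ
  set Φ := vfaPhi κ hκmeas hκprob with hΦ
  haveI : IsMarkovKernel Φ := vfaPhi_isMarkov κ hκmeas hκprob
  have hdis : ρ.fst ⊗ₖ Φ = ρ := vfa_disintegrate κ hκmeas hκprob
  have hΦmeas : Measurable (fun p : ℝ × ℝ => (Φ (z, p.1) s).toReal) :=
    ((Kernel.measurable_coe Φ hs).comp (measurable_const.prodMk measurable_fst)).ennreal_toReal
  have hΦbd : ∀ b : ℝ, (Φ (z, b) s).toReal ≤ 1 := fun b => by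
    haveI : IsMarkovKernel Φ := vfaPhi_isMarkov κ hκmeas hκprob
    exact ENNReal.toReal_le_of_le_ofReal one_pos.le (by simpa using prob_le_one)
  have hint1 : Integrable (fun p : ℝ × ℝ => φ p.1 * (Φ (z, p.1) s).toReal) ((ρ.fst ⊗ₖ Φ) z) := by
    refine Integrable.mono' (integrable_const 1)
      ((hφ.comp measurable_fst).mul hΦmeas).aestronglyMeasurable (ae_of_all _ fun p => ?_)
    rw [Real.norm_eq_abs, abs_mul]
    calc |φ p.1| * |(Φ (z, p.1) s).toReal| ≤ 1 * 1 := by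
          refine mul_le_mul (hφbd _) ?_ (abs_nonneg _) zero_le_one
          rw [abs_of_nonneg ENNReal.toReal_nonneg]; exact hΦbd _
      _ = 1 := one_mul 1
  have hint2 : Integrable (fun p : ℝ × ℝ => φ p.1 * Set.indicator s (fun _ => (1:ℝ)) p.2)
      ((ρ.fst ⊗ₖ Φ) z) := by
    refine Integrable.mono' (integrable_const 1)
      ((hφ.comp measurable_fst).mul ((measurable_const.indicator hs).comp
        measurable_snd)).aestronglyMeasurable (ae_of_all _ fun p => ?_)
    rw [Real.norm_eq_abs, abs_mul]
    calc |φ p.1| * |Set.indicator s (fun _ => (1:ℝ)) p.2| ≤ 1 * 1 := by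
          refine mul_le_mul (hφbd _) ?_ (abs_nonneg _) zero_le_one
          by_cases h : p.2 ∈ s <;> simp [Set.indicator_apply, h]
      _ = 1 := one_mul 1
  conv_lhs => rw [← hdis]
  conv_rhs => rw [← hdis]
  rw [ProbabilityTheory.integral_compProd hint1, ProbabilityTheory.integral_compProd hint2]
  refine integral_congr_ae (ae_of_all _ fun b => ?_)
  haveI : IsMarkovKernel Φ := vfaPhi_isMarkov κ hκmeas hκprob
  haveI : IsProbabilityMeasure (Φ (z, b)) := inferInstance
  simp only []
  rw [integral_const, integral_const_mul]
  have hii : ∫ a, s.indicator (fun _ => (1:ℝ)) a ∂(Φ (z,b)) = ((Φ (z,b)) s).toReal := by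
    exact integral_indicator_one (μ := Φ (z,b)) hs
  rw [hii]; simp

lemma vfa_integrable_of_bound {Ω : Type*} [MeasurableSpace Ω] (μ : Measure Ω)
    [IsFiniteMeasure μ] (f : Ω → ℝ) (hf : AEStronglyMeasurable f μ) (C : ℝ)
    (h : ∀ ω, |f ω| ≤ C) : Integrable f μ :=
  Integrable.mono' (integrable_const C) hf
    (ae_of_all _ fun ω => by simpa [Real.norm_eq_abs] using h ω)

/-- Lemma 3.1 (sufficiency of the filtering distributions for the dynamic programming
problem).  For the partially observed Markov chain `(S_t, Y_t)` with transition kernel `κ`,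
filtering distributions `π_t = P(Y_t ∈ · | S_0, …, S_t)`, and value functions `u_t`
defined by the American-option dynamic programming recursion with decisions
`d ∈ {E, H}` (here `true = E` (exercise) and `false = H` (hold)), for each `t ≤ T` there
is a function `ũ_t` of `(S_t, π_t, d)` such that almost surely
`u_t(S_0, …, S_t, d) = ũ_t(S_t, π_t, d)` for both decisions, and consequently
`u*_t(S_0, …, S_t) = max_d u_t = max_d ũ_t(S_t, π_t, d) = ũ*_t(S_t, π_t)` almost surely:
the value and the optimal decision depend on the price history only through `S_t` and
`π_t`. -/
theorem value_function_factors_through_filter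
    {Ω : Type*} [MeasurableSpace Ω] (μ : Measure Ω) [IsProbabilityMeasure μ]
    (T : ℕ) (hT : 0 < T)
    (S Y : ℕ → Ω → ℝ) (hS : ∀ t, Measurable (S t)) (hY : ∀ t, Measurable (Y t))
    (κ : ℝ × ℝ → Measure (ℝ × ℝ)) (hκmeas : Measurable κ)
    (hκprob : ∀ p, IsProbabilityMeasure (κ p))
    (hMarkov : ∀ t, t < T → ∀ f : ℝ × ℝ → ℝ, Measurable f → (∃ C, ∀ p, |f p| ≤ C) →
      μ[(fun ω => f (S (t + 1) ω, Y (t + 1) ω)) |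
          ⨆ i ∈ Finset.range (t + 1),
            MeasurableSpace.comap (fun ω => (S i ω, Y i ω)) inferInstance]
        =ᵐ[μ] fun ω => ∫ p, f p ∂(κ (S t ω, Y t ω)))
    (π : ℕ → Ω → Measure ℝ) (hπprob : ∀ t ω, IsProbabilityMeasure (π t ω))
    (hπmeas : ∀ t, Measurable[⨆ i ∈ Finset.range (t + 1),
        MeasurableSpace.comap (S i) inferInstance] (π t))
    (hπ : ∀ t, ∀ A : Set ℝ, MeasurableSet A →
      (fun ω => (π t ω A).toReal) =ᵐ[μ]
        μ[Set.indicator {ω | Y t ω ∈ A} (fun _ => (1 : ℝ)) |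
          ⨆ i ∈ Finset.range (t + 1), MeasurableSpace.comap (S i) inferInstance])
    (g : ℝ → ℝ) (hg : Measurable g) (hgbdd : ∃ C, ∀ x, |g x| ≤ C)
    (u : ℕ → (ℕ → ℝ) → Bool → ℝ)
    (hdep : ∀ t d s s', (∀ i, i ≤ t → s i = s' i) → u t s d = u t s' d)
    (huTE : ∀ s, u T s true = g (s T))
    (huTH : ∀ s, u T s false = 0)
    (huE : ∀ t, t < T → ∀ s, u t s true = g (s t))
    (huH : ∀ t, t < T →
      (fun ω => u t (fun i => S i ω) false) =ᵐ[μ]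
        μ[(fun ω => max (u (t + 1) (fun i => S i ω) true)
            (u (t + 1) (fun i => S i ω) false)) |
          ⨆ i ∈ Finset.range (t + 1), MeasurableSpace.comap (S i) inferInstance]) :
    ∀ t, t ≤ T → ∃ utilde : ℝ → Measure ℝ → Bool → ℝ,
      (∀ d : Bool,
        (fun ω => u t (fun i => S i ω) d) =ᵐ[μ] fun ω => utilde (S t ω) (π t ω) d) ∧
      ((fun ω => max (u t (fun i => S i ω) true) (u t (fun i => S i ω) false)) =ᵐ[μ]
        fun ω => max (utilde (S t ω) (π t ω) true) (utilde (S t ω) (π t ω) false)) := by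
  classical
  obtain ⟨Cg, hCg⟩ := hgbdd
  have hVecMeas : ∀ t : ℕ, Measurable (fun ω (i : Fin (t + 1)) => S (i : ℕ) ω) :=
    fun t => measurable_pi_lambda _ fun i => hS _
  have hFeq : ∀ t : ℕ,
      (⨆ i ∈ Finset.range (t + 1), MeasurableSpace.comap (S i) inferInstance
        : MeasurableSpace Ω)
      = MeasurableSpace.comap (fun ω (i : Fin (t + 1)) => S (i : ℕ) ω) inferInstance :=
    fun t => vfa_iSup_comap_eq S t
  have hFle : ∀ t : ℕ,
      (⨆ i ∈ Finset.range (t + 1), MeasurableSpace.comap (S i) inferInstance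
        : MeasurableSpace Ω) ≤ (inferInstance : MeasurableSpace Ω) := by
    intro t; rw [hFeq t]; exact (hVecMeas t).comap_le
  have hGle : ∀ t : ℕ,
      (⨆ i ∈ Finset.range (t + 1),
        MeasurableSpace.comap (fun ω => (S i ω, Y i ω)) inferInstance
        : MeasurableSpace Ω) ≤ (inferInstance : MeasurableSpace Ω) := by
    intro t
    rw [vfa_iSup_comap_eq (fun i ω => (S i ω, Y i ω)) t]
    exact (measurable_pi_lambda _ fun i => (hS _).prodMk (hY _)).comap_le
  have hFG : ∀ t : ℕ,
      (⨆ i ∈ Finset.range (t + 1), MeasurableSpace.comap (S i) inferInstance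
        : MeasurableSpace Ω)
      ≤ ⨆ i ∈ Finset.range (t + 1),
          MeasurableSpace.comap (fun ω => (S i ω, Y i ω)) inferInstance := by
    intro t
    refine iSup₂_mono fun i _ => ?_
    have hcc : MeasurableSpace.comap (S i) inferInstance
        = MeasurableSpace.comap (fun ω => (S i ω, Y i ω))
            (MeasurableSpace.comap Prod.fst inferInstance) := by
      rw [MeasurableSpace.comap_comp]; rfl
    rw [hcc]
    exact MeasurableSpace.comap_mono measurable_fst.comap_le
  -- the backward induction
  have key : ∀ k t, t + k = T → ∃ v : ℝ × vfaPM → ℝ, Measurable v ∧ (∃ C, ∀ z, |v z| ≤ C) ∧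
      ((fun ω => u t (fun i => S i ω) false) =ᵐ[μ]
        fun ω => v (S t ω, ⟨π t ω, hπprob t ω⟩)) := by
    intro k
    induction k with
    | zero =>
      intro t htT
      have hteq : t = T := by omega
      subst hteq
      exact ⟨fun _ => 0, measurable_const, ⟨0, fun z => by simp⟩,
        ae_of_all _ fun ω => by simp [huTH]⟩
    | succ k ih =>
      intro t htT
      have htlt : t < T := by omega
      obtain ⟨v', hv'meas, ⟨C', hC'⟩, hv'⟩ := ih (t + 1) (by omega)
      haveI hρM : IsMarkovKernel (vfaRho κ hκmeas hκprob) := vfaRho_isMarkov κ hκmeas hκprob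
      haveI hΦM : IsMarkovKernel (vfaPhi κ hκmeas hκprob) := vfaPhi_isMarkov κ hκmeas hκprob
      have hWm : Measurable (fun ω => (S (t + 1) ω, Y (t + 1) ω)) := (hS _).prodMk (hY _)
      -- (S1) identification of the filter with a condDistrib
      have hπD : ∀ᵐ ω ∂μ, π t ω
          = condDistrib (Y t) (fun ω (i : Fin (t + 1)) => S (i : ℕ) ω) μ
              (fun i : Fin (t + 1) => S (i : ℕ) ω) := by
        refine vfa_ae_measure_eq (fun ω => hπprob t ω) (fun ω => inferInstance) (fun r => ?_)
        have h1 := hπ t (Set.Iio (r : ℝ)) measurableSet_Iio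
        have h2 := condDistrib_ae_eq_condExp (μ := μ) (hVecMeas t) (hY t)
          (measurableSet_Iio (a := (r : ℝ)))
        rw [← hFeq t] at h2
        have hpre : {ω | Y t ω ∈ Set.Iio (r : ℝ)} = Y t ⁻¹' Set.Iio (r : ℝ) := rfl
        rw [hpre] at h1
        have h3 := h1.trans h2.symm
        filter_upwards [h3] with ω hω
        haveI := hπprob t ω
        exact (ENNReal.toReal_eq_toReal_iff' (measure_ne_top _ _) (measure_ne_top _ _)).mp hω
      -- (S3) identification of the one-step predictive kernel
      have hMt : ∀ᵐ ω ∂μ, condDistrib (fun ω => (S (t + 1) ω, Y (t + 1) ω))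
            (fun ω (i : Fin (t + 1)) => S (i : ℕ) ω) μ (fun i : Fin (t + 1) => S (i : ℕ) ω)
          = vfaRho κ hκmeas hκprob (S t ω, ⟨π t ω, hπprob t ω⟩) := by
        refine vfa_ae_measure_eq_prod (fun ω => inferInstance)
          (fun ω => hρM.isProbabilityMeasure _) (fun q r => ?_)
        have hDm : MeasurableSet (Set.Iio (q : ℝ) ×ˢ Set.Iio (r : ℝ)) :=
          measurableSet_Iio.prod measurableSet_Iio
        set D := Set.Iio (q : ℝ) ×ˢ Set.Iio (r : ℝ) with hDdef
        -- (a) condDistrib is a version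
        have hA := condDistrib_ae_eq_condExp (μ := μ) (hVecMeas t) hWm hDm
        rw [← hFeq t] at hA
        have hind : Set.indicator ((fun ω => (S (t + 1) ω, Y (t + 1) ω)) ⁻¹' D)
              (fun ω => (1 : ℝ))
            = fun ω => Set.indicator D (fun _ => (1 : ℝ)) ((S (t + 1) ω, Y (t + 1) ω)) := by
          funext ω
          by_cases h : (S (t + 1) ω, Y (t + 1) ω) ∈ D <;> simp [Set.indicator_apply, h]
        rw [hind] at hA
        -- (b) the Markov property gives another version
        have hmar := hMarkov t htlt (Set.indicator D (fun _ => (1 : ℝ)))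
          (measurable_const.indicator hDm)
          ⟨1, fun p => by by_cases h : p ∈ D <;> simp [Set.indicator_apply, h]⟩
        have htow := (condExp_condExp_of_le (hFG t) (hGle t)
          (f := fun ω => Set.indicator D (fun _ => (1 : ℝ)) ((S (t + 1) ω, Y (t + 1) ω)))
          (μ := μ)).symm
        have hmar' := condExp_congr_ae (m := ⨆ i ∈ Finset.range (t + 1),
          MeasurableSpace.comap (S i) inferInstance) (μ := μ)
          (hmar.trans (ae_of_all _ fun ω => by
            exact integral_indicator_one (μ := κ (S t ω, Y t ω)) hDm))
        have hcd := vfa_condexp_eq μ (hVecMeas t) (hY t)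
          (fun xy : (Fin (t + 1) → ℝ) × ℝ => (κ (xy.1 (Fin.last t), xy.2) D).toReal)
          (((Measure.measurable_coe hDm).comp hκmeas).ennreal_toReal.comp
            (((measurable_pi_apply (Fin.last t)).comp measurable_fst).prodMk measurable_snd))
          1 (fun p => by
            haveI := hκprob (p.1 (Fin.last t), p.2)
            rw [abs_of_nonneg ENNReal.toReal_nonneg]
            exact ENNReal.toReal_le_of_le_ofReal one_pos.le (by simpa using prob_le_one))
        rw [← hFeq t] at hcd
        simp only [Fin.val_last] at hcd
        have hchain := hA.trans (htow.trans (hmar'.trans hcd))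
        filter_upwards [hchain, hπD] with ω h1 h2
        rw [← h2] at h1
        have h3 : (vfaRho κ hκmeas hκprob (S t ω, ⟨π t ω, hπprob t ω⟩) D).toReal
            = ∫ y, (κ (S t ω, y) D).toReal ∂(π t ω) :=
          vfaRho_toReal κ hκmeas hκprob (S t ω, ⟨π t ω, hπprob t ω⟩) hDm
        rw [← h3] at h1
        haveI : IsProbabilityMeasure (vfaRho κ hκmeas hκprob (S t ω, ⟨π t ω, hπprob t ω⟩)) :=
          hρM.isProbabilityMeasure _
        exact (ENNReal.toReal_eq_toReal_iff' (measure_ne_top _ _) (measure_ne_top _ _)).mp h1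
      -- the integrand
      set Dmk : (Fin (t + 1) → ℝ) → vfaPM := fun x =>
        ⟨condDistrib (Y t) (fun ω (i : Fin (t + 1)) => S (i : ℕ) ω) μ x, inferInstance⟩
        with hDmk
      have hDmkMeas : Measurable Dmk := Measurable.subtype_mk (Kernel.measurable _)
      -- (S4) filtering recursion
      have hfilter : ∀ᵐ ω ∂μ, π (t + 1) ω
          = vfaPhi κ hκmeas hκprob ((S t ω, ⟨π t ω, hπprob t ω⟩), S (t + 1) ω) := by
        have hsnoc : ∀ ω, (Fin.snoc (fun i : Fin (t + 1) => S (i : ℕ) ω) (S (t + 1) ω)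
              : Fin (t + 1 + 1) → ℝ) = fun i : Fin (t + 1 + 1) => S (i : ℕ) ω := by
          intro ω; funext i
          refine Fin.lastCases ?_ (fun j => ?_) i
          · rw [Fin.snoc_last]; simp [Fin.val_last]
          · rw [Fin.snoc_castSucc]; simp [Fin.coe_castSucc]
        have hmono2 : (⨆ i ∈ Finset.range (t + 1),
              MeasurableSpace.comap (S i) inferInstance : MeasurableSpace Ω)
            ≤ ⨆ i ∈ Finset.range (t + 1 + 1), MeasurableSpace.comap (S i) inferInstance := by
          refine iSup_le fun i => iSup_le fun hi => ?_
          rw [Finset.mem_range] at hi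
          exact le_iSup₂ (f := fun (i : ℕ) (_ : i ∈ Finset.range (t + 1 + 1)) =>
            MeasurableSpace.comap (S i) inferInstance) i (Finset.mem_range.mpr (by omega))
        have hStm : Measurable[⨆ i ∈ Finset.range (t + 1),
            MeasurableSpace.comap (S i) inferInstance] (S t) :=
          Measurable.of_comap_le (le_iSup₂ (f := fun (i : ℕ) (_ : i ∈ Finset.range (t + 1)) =>
            MeasurableSpace.comap (S i) inferInstance) t (Finset.self_mem_range_succ t))
        have hZm2 : Measurable[⨆ i ∈ Finset.range (t + 1 + 1),
            MeasurableSpace.comap (S i) inferInstance] (fun ω =>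
              (((S t ω, ⟨π t ω, hπprob t ω⟩) : ℝ × vfaPM), S (t + 1) ω)) :=
          ((hStm.mono hmono2 le_rfl).prodMk
            (((hπmeas t).mono hmono2 le_rfl).subtype_mk)).prodMk
            (Measurable.of_comap_le (le_iSup₂
              (f := fun (i : ℕ) (_ : i ∈ Finset.range (t + 1 + 1)) =>
                MeasurableSpace.comap (S i) inferInstance) (t + 1)
              (Finset.self_mem_range_succ (t + 1))))
        have hΦtoReal_le : ∀ (a : (ℝ × vfaPM) × ℝ) (s : Set ℝ),
            ((vfaPhi κ hκmeas hκprob a) s).toReal ≤ 1 := fun a s => by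
          haveI : IsProbabilityMeasure (vfaPhi κ hκmeas hκprob a) :=
            hΦM.isProbabilityMeasure _
          exact ENNReal.toReal_le_of_le_ofReal one_pos.le (by simpa using prob_le_one)
        refine vfa_ae_measure_eq (fun ω => hπprob _ ω)
          (fun ω => hΦM.isProbabilityMeasure _) (fun r => ?_)
        have hsm : MeasurableSet (Set.Iio (r : ℝ)) := measurableSet_Iio
        have hcm : Measurable (fun ω => (vfaPhi κ hκmeas hκprob
            ((S t ω, ⟨π t ω, hπprob t ω⟩), S (t + 1) ω) (Set.Iio (r : ℝ))).toReal) := by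
          refine Measurable.ennreal_toReal ((Kernel.measurable_coe _ hsm).comp ?_)
          exact hZm2.mono (hFle (t + 1)) le_rfl
        have hcand : (fun ω => (vfaPhi κ hκmeas hκprob
              ((S t ω, ⟨π t ω, hπprob t ω⟩), S (t + 1) ω) (Set.Iio (r : ℝ))).toReal)
            =ᵐ[μ] μ[Set.indicator {ω | Y (t + 1) ω ∈ Set.Iio (r : ℝ)} (fun _ => (1 : ℝ)) |
                ⨆ i ∈ Finset.range (t + 1 + 1), MeasurableSpace.comap (S i) inferInstance] := by
          have hpre : {ω | Y (t + 1) ω ∈ Set.Iio (r : ℝ)} = Y (t + 1) ⁻¹' Set.Iio (r : ℝ) := rfl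
          refine ae_eq_condExp_of_forall_setIntegral_eq (hFle (t + 1)) ?_ ?_ ?_ ?_
          · rw [hpre]; exact (integrable_const (1 : ℝ)).indicator ((hY (t + 1)) hsm)
          · intro B hB hμB
            refine (vfa_integrable_of_bound μ _ hcm.aestronglyMeasurable 1
              (fun ω => ?_)).integrableOn
            rw [abs_of_nonneg ENNReal.toReal_nonneg]; exact hΦtoReal_le _ _
          · intro B hB hμB
            rw [hFeq (t + 1)] at hB
            obtain ⟨t', ht'm, rfl⟩ := hB
            have hBm : MeasurableSet ((fun ω (i : Fin (t + 1 + 1)) => S (i : ℕ) ω) ⁻¹' t') :=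
              (hVecMeas (t + 1)) ht'm
            set χ : (Fin (t + 1) → ℝ) → ℝ → ℝ := fun x b =>
              Set.indicator t' (fun _ => (1 : ℝ)) (Fin.snoc x b) with hχdef
            have hχm : Measurable (fun xb : (Fin (t + 1) → ℝ) × ℝ => χ xb.1 xb.2) :=
              (measurable_const.indicator ht'm).comp vfa_measurable_snoc
            have hχbd : ∀ x b, |χ x b| ≤ 1 := fun x b => by
              by_cases h : (Fin.snoc x b : Fin (t + 1 + 1) → ℝ) ∈ t' <;>
                simp [hχdef, Set.indicator_apply, h]
            set F1 : (Fin (t + 1) → ℝ) × (ℝ × ℝ) → ℝ := fun xp =>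
              χ xp.1 xp.2.1 * (vfaPhi κ hκmeas hκprob
                ((xp.1 (Fin.last t), Dmk xp.1), xp.2.1) (Set.Iio (r : ℝ))).toReal with hF1def
            set F2 : (Fin (t + 1) → ℝ) × (ℝ × ℝ) → ℝ := fun xp =>
              χ xp.1 xp.2.1 * Set.indicator (Set.Iio (r : ℝ)) (fun _ => (1 : ℝ)) xp.2.2
              with hF2def
            have hF1m : Measurable F1 := by
              refine Measurable.mul (hχm.comp
                (measurable_fst.prodMk (measurable_fst.comp measurable_snd))) ?_
              refine Measurable.ennreal_toReal ((Kernel.measurable_coe _ hsm).comp ?_)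
              exact (((measurable_pi_apply (Fin.last t)).comp measurable_fst).prodMk
                (hDmkMeas.comp measurable_fst)).prodMk (measurable_fst.comp measurable_snd)
            have hF2m : Measurable F2 := by
              refine Measurable.mul (hχm.comp
                (measurable_fst.prodMk (measurable_fst.comp measurable_snd))) ?_
              exact (measurable_const.indicator hsm).comp (measurable_snd.comp measurable_snd)
            have hF1bd : ∀ xp, |F1 xp| ≤ 1 := by
              intro xp
              rw [hF1def, abs_mul]
              calc |χ xp.1 xp.2.1| * |(vfaPhi κ hκmeas hκprob
                    ((xp.1 (Fin.last t), Dmk xp.1), xp.2.1) (Set.Iio (r : ℝ))).toReal|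
                  ≤ 1 * 1 := by
                    refine mul_le_mul (hχbd _ _) ?_ (abs_nonneg _) zero_le_one
                    rw [abs_of_nonneg ENNReal.toReal_nonneg]; exact hΦtoReal_le _ _
                _ = 1 := one_mul 1
            have hF2bd : ∀ xp, |F2 xp| ≤ 1 := by
              intro xp
              rw [hF2def, abs_mul]
              calc |χ xp.1 xp.2.1| * |Set.indicator (Set.Iio (r : ℝ)) (fun _ => (1 : ℝ)) xp.2.2|
                  ≤ 1 * 1 := by
                    refine mul_le_mul (hχbd _ _) ?_ (abs_nonneg _) zero_le_one
                    by_cases h : xp.2.2 ∈ Set.Iio (r : ℝ) <;> simp [Set.indicator_apply, h]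
                _ = 1 := one_mul 1
            have hcd1 := vfa_condexp_eq μ (hVecMeas t) hWm F1 hF1m 1 hF1bd
            have hcd2 := vfa_condexp_eq μ (hVecMeas t) hWm F2 hF2m 1 hF2bd
            rw [← hFeq t] at hcd1 hcd2
            have hint1 : Integrable (fun ω => F1 ((fun i : Fin (t + 1) => S (i : ℕ) ω),
                (S (t + 1) ω, Y (t + 1) ω))) μ :=
              vfa_integrable_of_bound μ _
                ((hF1m.comp ((hVecMeas t).prodMk hWm)).aestronglyMeasurable) 1
                (fun ω => hF1bd _)
            have hint2 : Integrable (fun ω => F2 ((fun i : Fin (t + 1) => S (i : ℕ) ω),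
                (S (t + 1) ω, Y (t + 1) ω))) μ :=
              vfa_integrable_of_bound μ _
                ((hF2m.comp ((hVecMeas t).prodMk hWm)).aestronglyMeasurable) 1
                (fun ω => hF2bd _)
            have hmain : ∫ ω, F1 ((fun i : Fin (t + 1) => S (i : ℕ) ω),
                  (S (t + 1) ω, Y (t + 1) ω)) ∂μ
                = ∫ ω, F2 ((fun i : Fin (t + 1) => S (i : ℕ) ω),
                  (S (t + 1) ω, Y (t + 1) ω)) ∂μ := by
              rw [← integral_condExp (hFle t) (f := fun ω => F1 ((fun i : Fin (t + 1) =>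
                  S (i : ℕ) ω), (S (t + 1) ω, Y (t + 1) ω))),
                ← integral_condExp (hFle t) (f := fun ω => F2 ((fun i : Fin (t + 1) =>
                  S (i : ℕ) ω), (S (t + 1) ω, Y (t + 1) ω))),
                integral_congr_ae hcd1, integral_congr_ae hcd2]
              refine integral_congr_ae ?_
              filter_upwards [hMt, hπD] with ω h2 h3
              have hD : Dmk (fun i : Fin (t + 1) => S (i : ℕ) ω) = ⟨π t ω, hπprob t ω⟩ :=
                Subtype.ext h3.symm
              rw [h2]
              simp only [hF1def, hF2def, hD, Fin.val_last]
              exact vfa_disint κ hκmeas hκprob hsm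
                (fun b => χ (fun i : Fin (t + 1) => S (i : ℕ) ω) b)
                (by
                  simp only [hχdef]
                  exact (measurable_const.indicator ht'm).comp
                    (show Measurable (fun b : ℝ =>
                        (Fin.snoc (fun i : Fin (t + 1) => S (i : ℕ) ω) b
                          : Fin (t + 1 + 1) → ℝ)) by
                      refine measurable_pi_lambda _ fun i => ?_
                      refine Fin.lastCases ?_ (fun j => ?_) i
                      · simpa [Fin.snoc_last] using measurable_id'
                      · simpa [Fin.snoc_castSucc] using measurable_const))
                (fun b => hχbd _ _) (S t ω, ⟨π t ω, hπprob t ω⟩)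
            have hLHS : ∫ ω in (fun ω (i : Fin (t + 1 + 1)) => S (i : ℕ) ω) ⁻¹' t',
                  (vfaPhi κ hκmeas hκprob
                    ((S t ω, ⟨π t ω, hπprob t ω⟩), S (t + 1) ω) (Set.Iio (r : ℝ))).toReal ∂μ
                = ∫ ω, F1 ((fun i : Fin (t + 1) => S (i : ℕ) ω),
                    (S (t + 1) ω, Y (t + 1) ω)) ∂μ := by
              rw [← integral_indicator hBm]
              refine integral_congr_ae ?_
              filter_upwards [hπD] with ω h3
              have hD : Dmk (fun i : Fin (t + 1) => S (i : ℕ) ω) = ⟨π t ω, hπprob t ω⟩ :=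
                Subtype.ext h3.symm
              simp only [hF1def, hχdef, hD, Fin.val_last, hsnoc ω]
              by_cases h : (fun i : Fin (t + 1 + 1) => S (i : ℕ) ω) ∈ t' <;>
                simp [Set.indicator_apply, h]
            have hRHS : ∫ ω in (fun ω (i : Fin (t + 1 + 1)) => S (i : ℕ) ω) ⁻¹' t',
                  Set.indicator {ω | Y (t + 1) ω ∈ Set.Iio (r : ℝ)} (fun _ => (1 : ℝ)) ω ∂μ
                = ∫ ω, F2 ((fun i : Fin (t + 1) => S (i : ℕ) ω),
                    (S (t + 1) ω, Y (t + 1) ω)) ∂μ := by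
              rw [← integral_indicator hBm]
              refine integral_congr_ae (ae_of_all _ fun ω => ?_)
              simp only [hF2def, hχdef, hsnoc ω]
              by_cases h1 : (fun i : Fin (t + 1 + 1) => S (i : ℕ) ω) ∈ t' <;>
                by_cases h2 : Y (t + 1) ω ∈ Set.Iio (r : ℝ) <;>
                  · simp only [Set.mem_Iio] at h2
                    simp [Set.indicator_apply, Set.mem_Iio, Set.mem_setOf_eq, h1, h2]
            exact hLHS.trans (hmain.trans hRHS.symm)
          · exact ((Measurable.ennreal_toReal ((Kernel.measurable_coe _ hsm).comp
              hZm2)).stronglyMeasurable).aestronglyMeasurable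
        have h1 := hπ (t + 1) (Set.Iio (r : ℝ)) hsm
        have h3 := h1.trans hcand.symm
        filter_upwards [h3] with ω hω
        haveI := hπprob (t + 1) ω
        haveI : IsProbabilityMeasure (vfaPhi κ hκmeas hκprob
            ((S t ω, ⟨π t ω, hπprob t ω⟩), S (t + 1) ω)) := hΦM.isProbabilityMeasure _
        exact (ENNReal.toReal_eq_toReal_iff' (measure_ne_top _ _) (measure_ne_top _ _)).mp hω
      set F : (Fin (t + 1) → ℝ) × (ℝ × ℝ) → ℝ := fun xp =>
        max (g xp.2.1) (v' (xp.2.1,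
          ⟨vfaPhi κ hκmeas hκprob ((xp.1 (Fin.last t), Dmk xp.1), xp.2.1), inferInstance⟩))
        with hFdef
      have hFmeas : Measurable F := by
        refine Measurable.max (hg.comp (measurable_fst.comp measurable_snd)) ?_
        refine hv'meas.comp (Measurable.prodMk (measurable_fst.comp measurable_snd) ?_)
        refine Measurable.subtype_mk ?_
        refine (Kernel.measurable _).comp ?_
        exact ((((measurable_pi_apply (Fin.last t)).comp measurable_fst).prodMk
          (hDmkMeas.comp measurable_fst)).prodMk (measurable_fst.comp measurable_snd))
      have hFbd : ∀ xp, |F xp| ≤ max Cg C' := by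
        intro xp
        refine (abs_max_le_max_abs_abs).trans ?_
        exact max_le_max (hCg _) (hC' _)
      -- Claim 1 : the time-(t+1) value is a.e. F (history, (S_{t+1}, Y_{t+1}))
      have hclaim1 : (fun ω => max (u (t + 1) (fun i => S i ω) true)
            (u (t + 1) (fun i => S i ω) false))
          =ᵐ[μ] fun ω => F ((fun i : Fin (t + 1) => S (i : ℕ) ω),
              (S (t + 1) ω, Y (t + 1) ω)) := by
        filter_upwards [hv', hfilter, hπD] with ω h1 h2 h3
        have htrue : u (t + 1) (fun i => S i ω) true = g (S (t + 1) ω) := by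
          by_cases ht1 : t + 1 = T
          · subst ht1; exact huTE _
          · exact huE (t + 1) (by omega) _
        have hD : Dmk (fun i : Fin (t + 1) => S (i : ℕ) ω) = ⟨π t ω, hπprob t ω⟩ :=
          Subtype.ext h3.symm
        rw [htrue, h1]
        simp only [hFdef, Fin.val_last, hD]
        congr 1
        exact congrArg v' (Prod.ext rfl (Subtype.ext h2))
      -- Claim 2 : conditional expectation step
      have hstep : (fun ω => u t (fun i => S i ω) false) =ᵐ[μ]
          fun ω => ∫ p, F ((fun i : Fin (t + 1) => S (i : ℕ) ω), p)
            ∂(condDistrib (fun ω => (S (t + 1) ω, Y (t + 1) ω))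
                (fun ω (i : Fin (t + 1)) => S (i : ℕ) ω) μ
                (fun i : Fin (t + 1) => S (i : ℕ) ω)) := by
        have h0 := huH t htlt
        have h1 := condExp_congr_ae (m := ⨆ i ∈ Finset.range (t + 1),
          MeasurableSpace.comap (S i) inferInstance) (μ := μ) hclaim1
        have h2 := vfa_condexp_eq μ (hVecMeas t) hWm F hFmeas (max Cg C') hFbd
        rw [← hFeq t] at h2
        exact h0.trans (h1.trans h2)
      -- replace kernels a.e.
      have hstep2 : (fun ω => u t (fun i => S i ω) false) =ᵐ[μ]
          fun ω => ∫ p, max (g p.1) (v' (p.1,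
              ⟨vfaPhi κ hκmeas hκprob ((S t ω, ⟨π t ω, hπprob t ω⟩), p.1), inferInstance⟩))
            ∂(vfaRho κ hκmeas hκprob (S t ω, ⟨π t ω, hπprob t ω⟩)) := by
        filter_upwards [hstep, hMt, hπD] with ω h1 h2 h3
        rw [h1, h2]
        have hD : Dmk (fun i : Fin (t + 1) => S (i : ℕ) ω) = ⟨π t ω, hπprob t ω⟩ :=
          Subtype.ext h3.symm
        refine integral_congr_ae (ae_of_all _ fun p => ?_)
        simp only [hFdef, Fin.val_last, hD]
      refine ⟨fun z => ∫ p, max (g p.1) (v' (p.1,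
          ⟨vfaPhi κ hκmeas hκprob (z, p.1), inferInstance⟩)) ∂(vfaRho κ hκmeas hκprob z),
        ?_, ?_, hstep2⟩
      · have hsm : StronglyMeasurable fun q : (ℝ × vfaPM) × (ℝ × ℝ) =>
            max (g q.2.1) (v' (q.2.1,
              ⟨vfaPhi κ hκmeas hκprob (q.1, q.2.1), inferInstance⟩)) := by
          refine Measurable.stronglyMeasurable ?_
          refine Measurable.max (hg.comp (measurable_fst.comp measurable_snd)) ?_
          refine hv'meas.comp (Measurable.prodMk (measurable_fst.comp measurable_snd) ?_)
          refine Measurable.subtype_mk ?_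
          exact (Kernel.measurable _).comp
            (measurable_fst.prodMk (measurable_fst.comp measurable_snd))
        exact (hsm.integral_kernel_prod_right' (κ := vfaRho κ hκmeas hκprob)).measurable
      · refine ⟨max Cg C', fun z => ?_⟩
        haveI : IsProbabilityMeasure (vfaRho κ hκmeas hκprob z) :=
          hρM.isProbabilityMeasure z
        rw [← Real.norm_eq_abs]
        calc ‖∫ p, max (g p.1) (v' (p.1,
              ⟨vfaPhi κ hκmeas hκprob (z, p.1), inferInstance⟩))
                ∂(vfaRho κ hκmeas hκprob z)‖
            ≤ max Cg C' * ((vfaRho κ hκmeas hκprob z) Set.univ).toReal := by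
              refine norm_integral_le_of_norm_le_const (ae_of_all _ fun p => ?_)
              rw [Real.norm_eq_abs]
              exact (abs_max_le_max_abs_abs).trans (max_le_max (hCg _) (hC' _))
          _ = max Cg C' := by simp
  -- final assembly
  intro t ht
  obtain ⟨v, hvmeas, hvbd, hv⟩ := key (T - t) t (by omega)
  refine ⟨fun x m d => if d then g x
      else (if hm : IsProbabilityMeasure m then v (x, ⟨m, hm⟩) else 0), ?_, ?_⟩
  · intro d
    cases d
    · filter_upwards [hv] with ω hω
      simpa [hπprob t ω] using hω
    · refine ae_of_all _ fun ω => ?_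
      by_cases hteq : t = T
      · subst hteq; simpa using huTE (fun i => S i ω)
      · simpa using huE t (by omega) (fun i => S i ω)
  · filter_upwards [hv] with ω hω
    have htrue : u t (fun i => S i ω) true = g (S t ω) := by
      by_cases hteq : t = T
      · subst hteq; exact huTE _
      · exact huE t (by omega) _
    rw [htrue, hω]
    simp [hπprob t ω]
end

section
/- For each t < T and each bounded measurable function f : ℝ × ℝ → ℝ, almost surely E[f(S_{t+1}, Y_{t+1}) | σ(S_0, …, S_t)] = ∫_ℝ ( ∫_{ℝ×ℝ} f(s', y') κ((S_t, y))(d(s', y')) ) π_t(dy); that is, the conditional expectation of a function of the next state given the observed price history equals the integral, against the filtering distribution π_t, of the one-step conditional expectation given (S_t, Y_t) = (S_t, y). -/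
open MeasureTheory ProbabilityTheory

/-- Sufficiency of the filtering distribution: for the partially observed Markov chain
`(S_t, Y_t)` with transition kernel `κ` and filtering distributions
`π_t = P(Y_t ∈ · | S_0, …, S_t)`, the conditional expectation of any bounded measurable
function `f` of the next state, given the observed price history `σ(S_0, …, S_t)`, equals
`∫ (∫ f dκ(S_t, y)) π_t(dy)` almost surely. -/
theorem filtering_sufficiency
    {Ω : Type*} [MeasurableSpace Ω] (μ : Measure Ω) [IsProbabilityMeasure μ]
    (T : ℕ) (hT : 0 < T)
    (S Y : ℕ → Ω → ℝ) (hS : ∀ t, Measurable (S t)) (hY : ∀ t, Measurable (Y t))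
    (κ : ℝ × ℝ → Measure (ℝ × ℝ)) (hκmeas : Measurable κ)
    (hκprob : ∀ p, IsProbabilityMeasure (κ p))
    -- `(S_t, Y_t)` is a time-homogeneous Markov chain with transition kernel `κ`
    (hMarkov : ∀ t, t < T → ∀ f : ℝ × ℝ → ℝ, Measurable f → (∃ C, ∀ p, |f p| ≤ C) →
      μ[(fun ω => f (S (t + 1) ω, Y (t + 1) ω)) |
          ⨆ i ∈ Finset.range (t + 1),
            MeasurableSpace.comap (fun ω => (S i ω, Y i ω)) inferInstance]
        =ᵐ[μ] fun ω => ∫ p, f p ∂(κ (S t ω, Y t ω)))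
    -- `π_t` is a regular version of the conditional law of `Y_t` given `σ(S_0, …, S_t)`
    (π : ℕ → Ω → Measure ℝ) (hπprob : ∀ t ω, IsProbabilityMeasure (π t ω))
    (hπmeas : ∀ t, Measurable[⨆ i ∈ Finset.range (t + 1),
        MeasurableSpace.comap (S i) inferInstance] (π t))
    (hπ : ∀ t, ∀ A : Set ℝ, MeasurableSet A →
      (fun ω => (π t ω A).toReal) =ᵐ[μ]
        μ[Set.indicator {ω | Y t ω ∈ A} (fun _ => (1 : ℝ)) |
          ⨆ i ∈ Finset.range (t + 1), MeasurableSpace.comap (S i) inferInstance]) :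
    ∀ t, t < T → ∀ f : ℝ × ℝ → ℝ, Measurable f → (∃ C, ∀ p, |f p| ≤ C) →
      μ[(fun ω => f (S (t + 1) ω, Y (t + 1) ω)) |
          ⨆ i ∈ Finset.range (t + 1), MeasurableSpace.comap (S i) inferInstance]
        =ᵐ[μ] fun ω => ∫ y, (∫ p, f p ∂(κ (S t ω, y))) ∂(π t ω) := by
  intro t ht f hf hfbdd
  obtain ⟨C, hC⟩ := hfbdd
  -- the kernel
  haveI : IsMarkovKernel (⟨κ, hκmeas⟩ : ProbabilityTheory.Kernel (ℝ × ℝ) (ℝ × ℝ)) :=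
    ⟨fun p => hκprob p⟩
  set K : ProbabilityTheory.Kernel (ℝ × ℝ) (ℝ × ℝ) := ⟨κ, hκmeas⟩ with hK
  -- the one-step conditional expectation
  set g : ℝ × ℝ → ℝ := fun p => ∫ q, f q ∂(κ p) with hg
  have hgbdd : ∀ p, |g p| ≤ C := by
    intro p
    have h1 : ‖∫ q, f q ∂(κ p)‖ ≤ C * ((κ p) Set.univ).toReal :=
      norm_integral_le_of_norm_le_const (Filter.Eventually.of_forall fun q => by
        simpa [Real.norm_eq_abs] using hC q)
    haveI := hκprob p
    simpa [Real.norm_eq_abs] using h1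
  have hgmeas : StronglyMeasurable g := by
    have : StronglyMeasurable fun p => ∫ q, f q ∂(K p) :=
      StronglyMeasurable.integral_kernel_prod_right'
        (f := fun q : (ℝ × ℝ) × (ℝ × ℝ) => f q.2) (hf.comp measurable_snd).stronglyMeasurable
    exact this
  -- σ-algebras
  have hmGF : (⨆ i ∈ Finset.range (t + 1),
        MeasurableSpace.comap (S i) inferInstance : MeasurableSpace Ω) ≤
      ⨆ i ∈ Finset.range (t + 1),
        MeasurableSpace.comap (fun ω => (S i ω, Y i ω)) inferInstance := by
    refine iSup₂_le fun i hi => ?_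
    have h1 : MeasurableSpace.comap (S i) inferInstance =
        MeasurableSpace.comap (fun ω => (S i ω, Y i ω))
          (MeasurableSpace.comap Prod.fst inferInstance) := by
      rw [MeasurableSpace.comap_comp]; rfl
    rw [h1]
    refine le_trans (MeasurableSpace.comap_mono ?_) (le_iSup₂ (f := fun i _ =>
      MeasurableSpace.comap (fun ω => (S i ω, Y i ω)) inferInstance) i hi)
    exact measurable_fst.comap_le
  have hmF0 : (⨆ i ∈ Finset.range (t + 1),
        MeasurableSpace.comap (fun ω => (S i ω, Y i ω)) inferInstance : MeasurableSpace Ω) ≤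
      (inferInstance : MeasurableSpace Ω) :=
    iSup₂_le fun i _ => ((hS i).prodMk (hY i)).comap_le
  -- the history map
  set X : Ω → (Fin (t + 1) → ℝ) := fun ω i => S i ω with hXdef
  have hX : Measurable X := measurable_pi_lambda _ fun i => hS i
  have hGX : (⨆ i ∈ Finset.range (t + 1),
        MeasurableSpace.comap (S i) inferInstance : MeasurableSpace Ω) =
      MeasurableSpace.comap X inferInstance := by
    have hpi : (inferInstance : MeasurableSpace (Fin (t + 1) → ℝ)) =
        ⨆ i : Fin (t + 1), MeasurableSpace.comap (fun x => x i) inferInstance := rfl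
    rw [hpi, MeasurableSpace.comap_iSup]
    simp_rw [MeasurableSpace.comap_comp]
    apply le_antisymm
    · refine iSup₂_le fun i hi => ?_
      exact le_iSup_of_le ⟨i, Finset.mem_range.mp hi⟩ le_rfl
    · refine iSup_le fun i => ?_
      exact le_iSup₂_of_le i.val (Finset.mem_range.mpr i.isLt) le_rfl
  -- Step 1: tower property and the Markov property
  have step1 : μ[(fun ω => f (S (t + 1) ω, Y (t + 1) ω)) |
        ⨆ i ∈ Finset.range (t + 1), MeasurableSpace.comap (S i) inferInstance]
      =ᵐ[μ] μ[(fun ω => g (S t ω, Y t ω)) |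
        ⨆ i ∈ Finset.range (t + 1), MeasurableSpace.comap (S i) inferInstance] := by
    have h1 := condExp_condExp_of_le hmGF hmF0
      (f := fun ω => f (S (t + 1) ω, Y (t + 1) ω)) (μ := μ)
    have h2 := condExp_congr_ae
      (m := ⨆ i ∈ Finset.range (t + 1), MeasurableSpace.comap (S i) inferInstance)
      (μ := μ) (hMarkov t ht f hf ⟨C, hC⟩)
    exact h1.symm.trans h2
  -- Step 2: conditional expectation via condDistrib
  set ν : ProbabilityTheory.Kernel (Fin (t + 1) → ℝ) ℝ := condDistrib (Y t) X μ with hν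
  have step2 : μ[(fun ω => g (S t ω, Y t ω)) |
        ⨆ i ∈ Finset.range (t + 1), MeasurableSpace.comap (S i) inferInstance]
      =ᵐ[μ] fun ω => ∫ y, g (S t ω, y) ∂(ν (X ω)) := by
    rw [hGX]
    set f' : ((Fin (t + 1) → ℝ) × ℝ) → ℝ := fun q => g (q.1 ⟨t, Nat.lt_succ_self t⟩, q.2)
      with hf'
    have hf'meas : StronglyMeasurable f' :=
      hgmeas.comp_measurable (((measurable_pi_apply _).comp measurable_fst).prodMk
        measurable_snd)
    have hint : Integrable (fun ω => f' (X ω, Y t ω)) μ := by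
      refine Integrable.mono' (integrable_const C) ?_
        (Filter.Eventually.of_forall fun ω => by simpa using hgbdd _)
      exact (hgmeas.comp_measurable ((hS t).prodMk (hY t))).aestronglyMeasurable
    exact condExp_prod_ae_eq_integral_condDistrib hX (hY t).aemeasurable hf'meas hint
  -- Step 3: a.e. identification of π t with the conditional distribution
  have step3 : ∀ᵐ ω ∂μ, π t ω = ν (X ω) := by
    have hsets : ∀ q : ℚ, ∀ᵐ ω ∂μ, π t ω (Set.Iic (q : ℝ)) = ν (X ω) (Set.Iic (q : ℝ)) := by
      intro q
      have h1 := hπ t (Set.Iic (q : ℝ)) measurableSet_Iic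
      have h2 := condDistrib_ae_eq_condExp (μ := μ) hX (hY t)
        (measurableSet_Iic (a := (q : ℝ)))
      rw [← hGX] at h2
      have h3 : (fun ω => (π t ω (Set.Iic (q : ℝ))).toReal)
          =ᵐ[μ] fun ω => ((ν (X ω)) (Set.Iic (q : ℝ))).toReal := by
        refine h1.trans (Filter.EventuallyEq.trans ?_ h2.symm)
        rfl
      filter_upwards [h3] with ω hω
      haveI := hπprob t ω
      haveI : IsMarkovKernel ν := by rw [hν]; infer_instance
      have hfin1 : π t ω (Set.Iic (q : ℝ)) ≠ ⊤ := measure_ne_top _ _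
      have hfin2 : ν (X ω) (Set.Iic (q : ℝ)) ≠ ⊤ := measure_ne_top _ _
      exact (ENNReal.toReal_eq_toReal_iff' hfin1 hfin2).mp hω
    have hall : ∀ᵐ ω ∂μ, ∀ q : ℚ, π t ω (Set.Iic (q : ℝ)) = ν (X ω) (Set.Iic (q : ℝ)) :=
      ae_all_iff.mpr hsets
    filter_upwards [hall] with ω hω
    haveI := hπprob t ω
    haveI : IsMarkovKernel ν := by rw [hν]; infer_instance
    refine MeasureTheory.ext_of_generate_finite _ ?_ Real.isPiSystem_Iic_rat ?_ ?_
    · borelize ℝ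
      exact Real.borel_eq_generateFrom_Iic_rat
    · intro s hs
      simp only [Set.mem_iUnion, Set.mem_singleton_iff] at hs
      obtain ⟨q, rfl⟩ := hs
      exact hω q
    · simp [measure_univ]
  have step3' : (fun ω => ∫ y, g (S t ω, y) ∂(ν (X ω)))
      =ᵐ[μ] fun ω => ∫ y, g (S t ω, y) ∂(π t ω) := by
    filter_upwards [step3] with ω hω
    rw [hω]
  exact (step1.trans step2).trans step3'
end

section
/- The expected initial value of the backward dynamic programming recursion equals the optimal stopping value: E[U_0] = sup_τ E[Z_τ · 1_{τ ≤ T}], where the supremum is taken over all stopping times τ : Ω → {0, 1, …, T} ∪ {∞} with respect to the filtration (ℱ_t), with the convention that the payoff is 0 on the event {τ = ∞} (the option is never exercised). -/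
open MeasureTheory Set

private lemma enat_succ_le_iff (x : ℕ∞) (n : ℕ) : ((n+1 : ℕ) : ℕ∞) ≤ x ↔ ¬ x ≤ (n:ℕ∞) := by
  rw [not_le]; push_cast; exact ENat.add_one_le_iff (by simp)

private lemma ge_split (τ : Ω → ℕ∞) (t : ℕ) :
    {ω | (t:ℕ∞) ≤ τ ω} = {ω | τ ω = (t:ℕ∞)} ∪ {ω | ((t+1:ℕ):ℕ∞) ≤ τ ω} := by
  ext ω
  simp only [mem_setOf_eq, mem_union]
  constructor
  · intro h
    rcases eq_or_lt_of_le h with h' | h'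
    · exact Or.inl h'.symm
    · right; push_cast; exact (ENat.add_one_le_iff (by simp)).2 h'
  · rintro (h | h)
    · exact h.ge
    · exact le_trans (by exact_mod_cast Nat.le_succ t) h

private lemma ge_disj (τ : Ω → ℕ∞) (t : ℕ) :
    Disjoint {ω | τ ω = (t:ℕ∞)} {ω | ((t+1:ℕ):ℕ∞) ≤ τ ω} := by
  rw [Set.disjoint_left]
  intro ω h1 h2
  simp only [mem_setOf_eq] at h1 h2
  rw [h1] at h2
  exact absurd (by exact_mod_cast h2) (by omega)

private lemma meas_eq_nat {Ω : Type*} {m : MeasurableSpace Ω} (𝔽 : Filtration ℕ m)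
    {τ : Ω → ℕ∞} (hτ : ∀ n : ℕ, MeasurableSet[𝔽 n] {ω | τ ω ≤ (n : ℕ∞)}) (s : ℕ) :
    MeasurableSet {ω | τ ω = (s:ℕ∞)} := by
  rcases s with _ | s
  · have h : {ω | τ ω = ((0:ℕ):ℕ∞)} = {ω | τ ω ≤ ((0:ℕ):ℕ∞)} := by
      ext ω; simp [nonpos_iff_eq_zero]
    rw [h]; exact 𝔽.le 0 _ (hτ 0)
  · have h : {ω | τ ω = ((s+1:ℕ):ℕ∞)} = {ω | τ ω ≤ ((s+1:ℕ):ℕ∞)} \ {ω | τ ω ≤ (s:ℕ∞)} := by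
      ext ω
      simp only [mem_setOf_eq, mem_diff]
      constructor
      · rintro h1
        rw [h1]
        refine ⟨le_rfl, ?_⟩
        rw [Nat.cast_le]; omega
      · rintro ⟨h1, h2⟩
        exact le_antisymm h1 ((enat_succ_le_iff (τ ω) s).2 h2)
    rw [h]
    exact (𝔽.le (s+1) _ (hτ (s+1))).diff (𝔽.le s _ (hτ s))

private lemma meas_ge_nat {Ω : Type*} {m : MeasurableSpace Ω} (𝔽 : Filtration ℕ m)
    {τ : Ω → ℕ∞} (hτ : ∀ n : ℕ, MeasurableSet[𝔽 n] {ω | τ ω ≤ (n : ℕ∞)}) (t : ℕ) :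
    MeasurableSet[𝔽 t] {ω | ((t+1:ℕ):ℕ∞) ≤ τ ω} := by
  have h : {ω | ((t+1:ℕ):ℕ∞) ≤ τ ω} = {ω | τ ω ≤ (t:ℕ∞)}ᶜ := by
    ext ω; simp only [mem_setOf_eq, mem_compl_iff, enat_succ_le_iff]
  rw [h]; exact (hτ t).compl

-- value of the sum on {τ = s}
private lemma g_on_eq {Ω : Type*} (T : ℕ) (Z : ℕ → Ω → ℝ) (τ : Ω → ℕ∞) {s : ℕ} (hsT : s ≤ T)
    {ω : Ω} (hω : τ ω = (s:ℕ∞)) :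
    ∑ k ∈ Finset.range (T+1), Set.indicator {ω | τ ω = (k:ℕ∞)} (Z k) ω = Z s ω := by
  have h0 : ∀ b ∈ Finset.range (T+1), b ≠ s →
      Set.indicator {ω | τ ω = (b:ℕ∞)} (Z b) ω = 0 := by
    intro b _ hbs
    apply Set.indicator_of_notMem
    simp only [mem_setOf_eq, hω]
    exact fun hc => hbs (by exact_mod_cast hc.symm)
  exact (Finset.sum_eq_single_of_mem s (Finset.mem_range.2 (by omega)) h0).trans
    (Set.indicator_of_mem (show ω ∈ {ω | τ ω = (s:ℕ∞)} from hω) _)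

private lemma g_on_top {Ω : Type*} (T : ℕ) (Z : ℕ → Ω → ℝ) (τ : Ω → ℕ∞)
    {ω : Ω} (hω : τ ω = ⊤) :
    ∑ k ∈ Finset.range (T+1), Set.indicator {ω | τ ω = (k:ℕ∞)} (Z k) ω = 0 := by
  apply Finset.sum_eq_zero
  intro k _
  apply Set.indicator_of_notMem
  simp [hω]

private lemma ind_eq_g {Ω : Type*} (T : ℕ) (Z : ℕ → Ω → ℝ) (τ : Ω → ℕ∞)
    (hτT : ∀ ω, τ ω ≤ (T : ℕ∞) ∨ τ ω = ⊤) (ω : Ω) :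
    Set.indicator {ω | τ ω ≤ (T : ℕ∞)} (fun ω => Z (τ ω).toNat ω) ω
      = ∑ k ∈ Finset.range (T+1), Set.indicator {ω | τ ω = (k:ℕ∞)} (Z k) ω := by
  rcases hτT ω with h | h
  · have hne : τ ω ≠ ⊤ := fun hc => by simp [hc] at h
    obtain ⟨k, hk⟩ := WithTop.ne_top_iff_exists.1 hne
    have hkT : k ≤ T := by rw [← hk] at h; exact Nat.cast_le.mp h
    rw [Set.indicator_of_mem (show ω ∈ {ω | τ ω ≤ (T:ℕ∞)} from h), g_on_eq T Z τ hkT hk.symm, ← hk]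
    rfl
  · rw [Set.indicator_of_notMem (by simp [h]), g_on_top T Z τ h]

private lemma U_int {Ω : Type*} {m : MeasurableSpace Ω} {μ : Measure Ω} [IsProbabilityMeasure μ]
    {T : ℕ} {𝔽 : Filtration ℕ m} {Z U : ℕ → Ω → ℝ}
    (hint : ∀ t, Integrable (Z t) μ)
    (hUT : U T = fun ω => max (Z T ω) 0)
    (hU : ∀ t, t < T → U t = fun ω => max (Z t ω) ((μ[U (t + 1) | 𝔽 t]) ω)) :
    ∀ t, t ≤ T → Integrable (U t) μ := by
  intro t htT
  rcases eq_or_lt_of_le htT with rfl | hlt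
  · rw [hUT]; exact (hint t).sup (integrable_const 0)
  · rw [hU t hlt]
    exact (hint t).sup integrable_condExp

private lemma snell_upper {Ω : Type*} {m : MeasurableSpace Ω} {μ : Measure Ω}
    [IsProbabilityMeasure μ]
    {T : ℕ} {𝔽 : Filtration ℕ m} {Z U : ℕ → Ω → ℝ}
    (hint : ∀ t, Integrable (Z t) μ)
    (hUT : U T = fun ω => max (Z T ω) 0)
    (hU : ∀ t, t < T → U t = fun ω => max (Z t ω) ((μ[U (t + 1) | 𝔽 t]) ω))
    (hUint : ∀ t, t ≤ T → Integrable (U t) μ)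
    (τ : Ω → ℕ∞) (hτ : ∀ n : ℕ, MeasurableSet[𝔽 n] {ω | τ ω ≤ (n : ℕ∞)})
    (hτT : ∀ ω, τ ω ≤ (T : ℕ∞) ∨ τ ω = ⊤) :
    ∀ d t, t + d = T →
      ∫ ω in {ω | (t:ℕ∞) ≤ τ ω},
          (∑ k ∈ Finset.range (T+1), Set.indicator {ω | τ ω = (k:ℕ∞)} (Z k) ω) ∂μ
        ≤ ∫ ω in {ω | (t:ℕ∞) ≤ τ ω}, U t ω ∂μ := by
  have hgint : Integrable
      (fun ω => ∑ k ∈ Finset.range (T+1), Set.indicator {ω | τ ω = (k:ℕ∞)} (Z k) ω) μ := by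
    apply integrable_finset_sum
    intro k _
    exact (hint k).indicator (meas_eq_nat 𝔽 hτ k)
  have hms : ∀ s : ℕ, MeasurableSet {ω | τ ω = (s:ℕ∞)} := meas_eq_nat 𝔽 hτ
  have hmge : ∀ t : ℕ, MeasurableSet {ω | ((t+1:ℕ):ℕ∞) ≤ τ ω} :=
    fun t => 𝔽.le t _ (meas_ge_nat 𝔽 hτ t)
  intro d
  induction d with
  | zero =>
    intro t ht
    simp only [Nat.add_zero] at ht
    subst ht
    rw [ge_split τ t,
      setIntegral_union (ge_disj τ t) (hmge t) hgint.integrableOn hgint.integrableOn,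
      setIntegral_union (ge_disj τ t) (hmge t) ((hUint t le_rfl).integrableOn)
        ((hUint t le_rfl).integrableOn)]
    have h1 : ∫ ω in {ω | τ ω = (t:ℕ∞)},
        (∑ k ∈ Finset.range (t+1), Set.indicator {ω | τ ω = (k:ℕ∞)} (Z k) ω) ∂μ
        ≤ ∫ ω in {ω | τ ω = (t:ℕ∞)}, U t ω ∂μ := by
      rw [setIntegral_congr_fun (hms t)
        (fun ω hω => g_on_eq t Z τ le_rfl hω)]
      apply setIntegral_mono_on ((hint t).integrableOn) ((hUint t le_rfl).integrableOn) (hms t)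
      intro ω _
      rw [show U t = fun ω => max (Z t ω) 0 from hUT]
      exact le_max_left _ _
    have h2 : ∫ ω in {ω | ((t+1:ℕ):ℕ∞) ≤ τ ω},
        (∑ k ∈ Finset.range (t+1), Set.indicator {ω | τ ω = (k:ℕ∞)} (Z k) ω) ∂μ
        ≤ ∫ ω in {ω | ((t+1:ℕ):ℕ∞) ≤ τ ω}, U t ω ∂μ := by
      have hz : ∀ ω ∈ {ω | ((t+1:ℕ):ℕ∞) ≤ τ ω},
          (∑ k ∈ Finset.range (t+1), Set.indicator {ω | τ ω = (k:ℕ∞)} (Z k) ω)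
            = (0:ℝ) := by
        intro ω hω
        have htop : τ ω = ⊤ := by
          rcases hτT ω with h | h
          · exfalso
            have := le_trans hω h
            rw [Nat.cast_le] at this
            omega
          · exact h
        exact g_on_top t Z τ htop
      rw [setIntegral_congr_fun (hmge t) hz]
      simp only [integral_zero]
      apply setIntegral_nonneg (hmge t)
      intro ω _
      rw [show U t = fun ω => max (Z t ω) 0 from hUT]
      exact le_max_right _ _
    exact add_le_add h1 h2
  | succ d ih =>
    intro t ht
    have htT : t < T := by omega
    have hUt : Integrable (U t) μ := hUint t htT.le
    have hUt1 : Integrable (U (t+1)) μ := hUint (t+1) (by omega)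
    rw [ge_split τ t,
      setIntegral_union (ge_disj τ t) (hmge t) hgint.integrableOn hgint.integrableOn,
      setIntegral_union (ge_disj τ t) (hmge t) hUt.integrableOn hUt.integrableOn]
    have h1 : ∫ ω in {ω | τ ω = (t:ℕ∞)},
        (∑ k ∈ Finset.range (T+1), Set.indicator {ω | τ ω = (k:ℕ∞)} (Z k) ω) ∂μ
        ≤ ∫ ω in {ω | τ ω = (t:ℕ∞)}, U t ω ∂μ := by
      rw [setIntegral_congr_fun (hms t) (fun ω hω => g_on_eq T Z τ htT.le hω)]
      apply setIntegral_mono_on ((hint t).integrableOn) (hUt.integrableOn) (hms t)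
      intro ω _
      rw [hU t htT]
      exact le_max_left _ _
    have h2 : ∫ ω in {ω | ((t+1:ℕ):ℕ∞) ≤ τ ω},
        (∑ k ∈ Finset.range (T+1), Set.indicator {ω | τ ω = (k:ℕ∞)} (Z k) ω) ∂μ
        ≤ ∫ ω in {ω | ((t+1:ℕ):ℕ∞) ≤ τ ω}, U t ω ∂μ := by
      refine le_trans (ih (t+1) (by omega)) ?_
      rw [← setIntegral_condExp (𝔽.le t) hUt1 (meas_ge_nat 𝔽 hτ t)]
      apply setIntegral_mono_on (integrable_condExp.integrableOn) (hUt.integrableOn) (hmge t)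
      intro ω _
      rw [hU t htT]
      exact le_max_right _ _
    exact add_le_add h1 h2

private lemma U_meas {Ω : Type*} {m : MeasurableSpace Ω} {μ : Measure Ω} [IsProbabilityMeasure μ]
    {T : ℕ} {𝔽 : Filtration ℕ m} {Z U : ℕ → Ω → ℝ}
    (hadapted : Adapted 𝔽 Z)
    (hUT : U T = fun ω => max (Z T ω) 0)
    (hU : ∀ t, t < T → U t = fun ω => max (Z t ω) ((μ[U (t + 1) | 𝔽 t]) ω)) :
    ∀ t, t ≤ T → StronglyMeasurable[𝔽 t] (U t) := by
  intro t htT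
  rcases eq_or_lt_of_le htT with rfl | hlt
  · rw [hUT]
    letI : MeasurableSpace Ω := 𝔽 t
    exact (hadapted t).stronglyMeasurable.sup stronglyMeasurable_const
  · rw [hU t hlt]
    letI : MeasurableSpace Ω := 𝔽 t
    exact (hadapted t).stronglyMeasurable.sup stronglyMeasurable_condExp

private lemma snell_eq {Ω : Type*} {m : MeasurableSpace Ω} {μ : Measure Ω}
    [IsProbabilityMeasure μ]
    {T : ℕ} {𝔽 : Filtration ℕ m} {Z U : ℕ → Ω → ℝ}
    (hint : ∀ t, Integrable (Z t) μ)
    (hUT : U T = fun ω => max (Z T ω) 0)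
    (hU : ∀ t, t < T → U t = fun ω => max (Z t ω) ((μ[U (t + 1) | 𝔽 t]) ω))
    (hUint : ∀ t, t ≤ T → Integrable (U t) μ)
    (τ : Ω → ℕ∞) (hτ : ∀ n : ℕ, MeasurableSet[𝔽 n] {ω | τ ω ≤ (n : ℕ∞)})
    (hτT : ∀ ω, τ ω ≤ (T : ℕ∞) ∨ τ ω = ⊤)
    (heq : ∀ t : ℕ, ∀ ω, τ ω = (t:ℕ∞) → U t ω = Z t ω)
    (hne : ∀ t, ∀ ω, t ≤ T → ((t+1:ℕ):ℕ∞) ≤ τ ω → U t ω ≠ Z t ω) :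
    ∀ d t, t + d = T →
      ∫ ω in {ω | (t:ℕ∞) ≤ τ ω}, U t ω ∂μ
        = ∫ ω in {ω | (t:ℕ∞) ≤ τ ω},
          (∑ k ∈ Finset.range (T+1), Set.indicator {ω | τ ω = (k:ℕ∞)} (Z k) ω) ∂μ := by
  have hgint : Integrable
      (fun ω => ∑ k ∈ Finset.range (T+1), Set.indicator {ω | τ ω = (k:ℕ∞)} (Z k) ω) μ := by
    apply integrable_finset_sum
    intro k _
    exact (hint k).indicator (meas_eq_nat 𝔽 hτ k)
  have hms : ∀ s : ℕ, MeasurableSet {ω | τ ω = (s:ℕ∞)} := meas_eq_nat 𝔽 hτ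
  have hmge : ∀ t : ℕ, MeasurableSet {ω | ((t+1:ℕ):ℕ∞) ≤ τ ω} :=
    fun t => 𝔽.le t _ (meas_ge_nat 𝔽 hτ t)
  intro d
  induction d with
  | zero =>
    intro t ht
    simp only [Nat.add_zero] at ht
    subst ht
    rw [ge_split τ t,
      setIntegral_union (ge_disj τ t) (hmge t) hgint.integrableOn hgint.integrableOn,
      setIntegral_union (ge_disj τ t) (hmge t) ((hUint t le_rfl).integrableOn)
        ((hUint t le_rfl).integrableOn)]
    have h1 : ∫ ω in {ω | τ ω = (t:ℕ∞)}, U t ω ∂μ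
        = ∫ ω in {ω | τ ω = (t:ℕ∞)},
          (∑ k ∈ Finset.range (t+1), Set.indicator {ω | τ ω = (k:ℕ∞)} (Z k) ω) ∂μ := by
      apply setIntegral_congr_fun (hms t)
      intro ω hω
      dsimp only
      rw [g_on_eq t Z τ le_rfl hω]
      exact heq t ω hω
    have h2 : ∫ ω in {ω | ((t+1:ℕ):ℕ∞) ≤ τ ω}, U t ω ∂μ
        = ∫ ω in {ω | ((t+1:ℕ):ℕ∞) ≤ τ ω},
          (∑ k ∈ Finset.range (t+1), Set.indicator {ω | τ ω = (k:ℕ∞)} (Z k) ω) ∂μ := by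
      apply setIntegral_congr_fun (hmge t)
      intro ω hω
      dsimp only
      have htop : τ ω = ⊤ := by
        rcases hτT ω with h | h
        · exfalso
          have := le_trans hω h
          rw [Nat.cast_le] at this
          omega
        · exact h
      rw [g_on_top t Z τ htop]
      have hneq := hne t ω le_rfl hω
      rw [show U t = fun ω => max (Z t ω) 0 from hUT] at hneq ⊢
      simp only
      rcases max_choice (Z t ω) 0 with h | h
      · exact absurd h hneq
      · exact h
    rw [h1, h2]
  | succ d ih =>
    intro t ht
    have htT : t < T := by omega
    have hUt : Integrable (U t) μ := hUint t htT.le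
    have hUt1 : Integrable (U (t+1)) μ := hUint (t+1) (by omega)
    rw [ge_split τ t,
      setIntegral_union (ge_disj τ t) (hmge t) hgint.integrableOn hgint.integrableOn,
      setIntegral_union (ge_disj τ t) (hmge t) hUt.integrableOn hUt.integrableOn]
    have h1 : ∫ ω in {ω | τ ω = (t:ℕ∞)}, U t ω ∂μ
        = ∫ ω in {ω | τ ω = (t:ℕ∞)},
          (∑ k ∈ Finset.range (T+1), Set.indicator {ω | τ ω = (k:ℕ∞)} (Z k) ω) ∂μ := by
      apply setIntegral_congr_fun (hms t)
      intro ω hω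
      dsimp only
      rw [g_on_eq T Z τ htT.le hω]
      exact heq t ω hω
    have h2 : ∫ ω in {ω | ((t+1:ℕ):ℕ∞) ≤ τ ω}, U t ω ∂μ
        = ∫ ω in {ω | ((t+1:ℕ):ℕ∞) ≤ τ ω},
          (∑ k ∈ Finset.range (T+1), Set.indicator {ω | τ ω = (k:ℕ∞)} (Z k) ω) ∂μ := by
      have hcond : ∫ ω in {ω | ((t+1:ℕ):ℕ∞) ≤ τ ω}, U t ω ∂μ
          = ∫ ω in {ω | ((t+1:ℕ):ℕ∞) ≤ τ ω}, (μ[U (t+1) | 𝔽 t]) ω ∂μ := by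
        apply setIntegral_congr_fun (hmge t)
        intro ω hω
        have hneq := hne t ω htT.le hω
        rw [hU t htT] at hneq ⊢
        simp only
        rcases max_choice (Z t ω) ((μ[U (t+1) | 𝔽 t]) ω) with h | h
        · exact absurd h hneq
        · exact h
      rw [hcond, setIntegral_condExp (𝔽.le t) hUt1 (meas_ge_nat 𝔽 hτ t)]
      exact ih (t+1) (by omega)
    rw [h1, h2]


/-- The expected initial value of the backward dynamic-programming (Snell envelope)
recursion `U_T = max(Z_T, 0)`, `U_t = max(Z_t, E[U_{t+1} | ℱ_t])` equals the optimal
stopping value `sup_τ E[Z_τ · 1_{τ ≤ T}]`, the supremum being over all stopping times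
`τ : Ω → {0,…,T} ∪ {∞}`, with payoff `0` on `{τ = ∞}`. -/
theorem snell_envelope_optimal_stopping
    {Ω : Type*} {m : MeasurableSpace Ω} (μ : Measure Ω) [IsProbabilityMeasure μ]
    (T : ℕ) (hT : 0 < T) (𝔽 : Filtration ℕ m)
    (Z : ℕ → Ω → ℝ) (hadapted : Adapted 𝔽 Z) (hint : ∀ t, Integrable (Z t) μ)
    (U : ℕ → Ω → ℝ)
    (hUT : U T = fun ω => max (Z T ω) 0)
    (hU : ∀ t, t < T → U t = fun ω => max (Z t ω) ((μ[U (t + 1) | 𝔽 t]) ω)) :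
    ∫ ω, U 0 ω ∂μ =
      ⨆ τ : {τ : Ω → ℕ∞ //
          (∀ n : ℕ, MeasurableSet[𝔽 n] {ω | τ ω ≤ (n : ℕ∞)}) ∧
          ∀ ω, τ ω ≤ (T : ℕ∞) ∨ τ ω = ⊤},
        ∫ ω, Set.indicator {ω | τ.1 ω ≤ (T : ℕ∞)} (fun ω => Z (τ.1 ω).toNat ω) ω ∂μ := by
  classical
  have hUint : ∀ t, t ≤ T → Integrable (U t) μ := U_int hint hUT hU
  have hUmeas : ∀ t, t ≤ T → StronglyMeasurable[𝔽 t] (U t) := U_meas hadapted hUT hU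
  have huniv : ∀ τ : Ω → ℕ∞, {ω | ((0:ℕ):ℕ∞) ≤ τ ω} = Set.univ := by
    intro τ; ext ω; simp
  have hval : ∀ τ : Ω → ℕ∞, (∀ ω, τ ω ≤ (T:ℕ∞) ∨ τ ω = ⊤) →
      ∫ ω, Set.indicator {ω | τ ω ≤ (T:ℕ∞)} (fun ω => Z (τ ω).toNat ω) ω ∂μ
        = ∫ ω, (∑ k ∈ Finset.range (T+1), Set.indicator {ω | τ ω = (k:ℕ∞)} (Z k) ω) ∂μ := by
    intro τ hτT
    exact integral_congr_ae (Filter.Eventually.of_forall (fun ω => ind_eq_g T Z τ hτT ω))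
  have hub : ∀ τ : {τ : Ω → ℕ∞ //
        (∀ n : ℕ, MeasurableSet[𝔽 n] {ω | τ ω ≤ (n : ℕ∞)}) ∧
        ∀ ω, τ ω ≤ (T : ℕ∞) ∨ τ ω = ⊤},
      ∫ ω, Set.indicator {ω | τ.1 ω ≤ (T : ℕ∞)} (fun ω => Z (τ.1 ω).toNat ω) ω ∂μ
        ≤ ∫ ω, U 0 ω ∂μ := by
    rintro ⟨τ, hτ, hτT⟩
    rw [hval τ hτT]
    have h := snell_upper hint hUT hU hUint τ hτ hτT T 0 (Nat.zero_add T)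
    rwa [huniv τ, Measure.restrict_univ] at h
  set τs : Ω → ℕ∞ :=
    fun ω => if h : ∃ t, U t ω = Z t ω ∧ t ≤ T then ((Nat.find h : ℕ) : ℕ∞) else ⊤ with hτs_def
  have hτsT : ∀ ω, τs ω ≤ (T:ℕ∞) ∨ τs ω = ⊤ := by
    intro ω
    by_cases h : ∃ t, U t ω = Z t ω ∧ t ≤ T
    · left
      simp only [hτs_def, dif_pos h]
      exact_mod_cast (Nat.find_spec h).2
    · right
      simp only [hτs_def, dif_neg h]
  have hτstop : ∀ n : ℕ, MeasurableSet[𝔽 n] {ω | τs ω ≤ (n:ℕ∞)} := by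
    intro n
    have hset : {ω | τs ω ≤ (n:ℕ∞)}
        = ⋃ t ∈ Finset.range (min n T + 1), {ω | U t ω = Z t ω} := by
      ext ω
      simp only [mem_setOf_eq, Set.mem_iUnion, Finset.mem_range]
      constructor
      · intro hle
        by_cases h : ∃ t, U t ω = Z t ω ∧ t ≤ T
        · refine ⟨Nat.find h, ⟨?_, (Nat.find_spec h).1⟩⟩
          have h1 : ((Nat.find h : ℕ) : ℕ∞) ≤ (n:ℕ∞) := by
            simpa only [hτs_def, dif_pos h] using hle
          have h2 := Nat.cast_le.mp h1
          have h3 := (Nat.find_spec h).2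
          omega
        · exfalso
          simp only [hτs_def, dif_neg h] at hle
          exact absurd (top_le_iff.mp hle).symm (by simp)
      · rintro ⟨t, htlt, hteq⟩
        have hh : ∃ s, U s ω = Z s ω ∧ s ≤ T := ⟨t, hteq, by omega⟩
        have hfind : Nat.find hh ≤ t := Nat.find_min' hh ⟨hteq, by omega⟩
        simp only [hτs_def, dif_pos hh]
        have : Nat.find hh ≤ n := by omega
        exact_mod_cast this
    rw [hset]
    refine Finset.measurableSet_biUnion _ (fun t ht => ?_)
    have htn : t ≤ n := by
      simp only [Finset.mem_range] at ht; omega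
    have htT : t ≤ T := by
      simp only [Finset.mem_range] at ht; omega
    exact ((hUmeas t htT).mono (𝔽.mono htn)).measurableSet_eq_fun
      ((hadapted t).stronglyMeasurable.mono (𝔽.mono htn))
  have hseq : ∀ t : ℕ, ∀ ω, τs ω = (t:ℕ∞) → U t ω = Z t ω := by
    intro t ω hω
    by_cases h : ∃ s, U s ω = Z s ω ∧ s ≤ T
    · simp only [hτs_def, dif_pos h] at hω
      have ht : Nat.find h = t := Nat.cast_inj.mp hω
      rw [← ht]
      exact (Nat.find_spec h).1
    · simp only [hτs_def, dif_neg h] at hω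
      exact absurd hω.symm (by simp)
  have hsne : ∀ t : ℕ, ∀ ω, t ≤ T → ((t+1:ℕ):ℕ∞) ≤ τs ω → U t ω ≠ Z t ω := by
    intro t ω htT hge heq'
    have hh : ∃ s, U s ω = Z s ω ∧ s ≤ T := ⟨t, heq', htT⟩
    have hfind : Nat.find hh ≤ t := Nat.find_min' hh ⟨heq', htT⟩
    have hτsw : τs ω = ((Nat.find hh : ℕ) : ℕ∞) := by
      simp only [hτs_def, dif_pos hh]
    rw [hτsw] at hge
    have := Nat.cast_le.mp hge
    omega
  have hlow : ∫ ω, U 0 ω ∂μ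
      = ∫ ω, Set.indicator {ω | τs ω ≤ (T:ℕ∞)} (fun ω => Z (τs ω).toNat ω) ω ∂μ := by
    rw [hval τs hτsT]
    have h := snell_eq hint hUT hU hUint τs hτstop hτsT hseq hsne T 0 (Nat.zero_add T)
    rwa [huniv τs, Measure.restrict_univ] at h
  haveI : Nonempty {τ : Ω → ℕ∞ //
      (∀ n : ℕ, MeasurableSet[𝔽 n] {ω | τ ω ≤ (n : ℕ∞)}) ∧
      ∀ ω, τ ω ≤ (T : ℕ∞) ∨ τ ω = ⊤} := ⟨⟨τs, hτstop, hτsT⟩⟩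
  refine le_antisymm ?_ (ciSup_le hub)
  rw [hlow]
  have hbdd : BddAbove (Set.range fun τ : {τ : Ω → ℕ∞ //
      (∀ n : ℕ, MeasurableSet[𝔽 n] {ω | τ ω ≤ (n : ℕ∞)}) ∧
      ∀ ω, τ ω ≤ (T : ℕ∞) ∨ τ ω = ⊤} =>
      ∫ ω, Set.indicator {ω | τ.1 ω ≤ (T : ℕ∞)} (fun ω => Z (τ.1 ω).toNat ω) ω ∂μ) := by
    refine ⟨∫ ω, U 0 ω ∂μ, ?_⟩
    rintro x ⟨τ, rfl⟩
    exact hub τ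
  exact le_ciSup hbdd ⟨τs, hτstop, hτsT⟩
end
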